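/- Let 0 < p < 1 and let f be the H_p(G x G) martingale built from atoms a_k = 2^{alpha_k(2/p-2)}(D_{2^{alpha_k+1}} - D_{2^{alpha_k}}) tensor (D_{2^{alpha_k+1}} - D_{2^{alpha_k}}) with coefficients lambda_k = Phi(2^{alpha_k})^{-1/4}. For 2^{alpha_k} < n < 2^{alpha_k + 1} with n odd, and for all (x,y) in (G \ I_1) x (G \ I_1), one has |S_{n,n} f(x,y)| = 2^{alpha_k(2/p-2)} / Phi^{1/4}(2^{alpha_k}). -/

import Mathlib

open MeasureTheory ENNReal NNReal

noncomputable section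

/-- The Walsh group: countable product of `ZMod 2`. -/
abbrev G : Type := ℕ → ZMod 2

instance : MeasurableSpace (ZMod 2) := ⊤

/-- Walsh-Paley function `w n`. -/
def walsh (n : ℕ) (x : G) : ℝ :=
  ∏ k ∈ Finset.range (n + 1), if n.testBit k ∧ x k = 1 then -1 else 1

/-- Walsh-Dirichlet kernel `D n`. -/
def dirichlet (n : ℕ) (x : G) : ℝ := ∑ k ∈ Finset.range n, walsh k x

/-- Dyadic interval `I_n` (centered at `0`). -/
def Icyl (n : ℕ) : Set G := {x : G | ∀ k < n, x k = 0}

/-- `μ` is the normalized Haar (fair-coin product) measure on `G`: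
it gives each cylinder of depth `n` measure `2⁻ⁿ`. -/
def IsStdHaar (μ : Measure G) : Prop :=
  ∀ (n : ℕ) (x : G), μ {y : G | ∀ k < n, y k = x k} = 2⁻¹ ^ n


/-- A `p`-atom supported on the square `I_N × I_N`. -/
def IsPAtom (μ : Measure G) (p : ℝ) (N : ℕ) (a : G × G → ℝ) : Prop :=
  Measurable a ∧
    (∀ z : G × G, z ∉ Icyl N ×ˢ Icyl N → a z = 0) ∧
    (∫ z, a z ∂(μ.prod μ)) = 0 ∧
    ∀ z, |a z| ≤ (2 : ℝ) ^ ((2 * N : ℝ) / p)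

/-- Two-dimensional Walsh-Fourier coefficient. -/
def fourierCoef (μ : Measure G) (a : G × G → ℝ) (i j : ℕ) : ℝ :=
  ∫ z, a z * walsh i z.1 * walsh j z.2 ∂(μ.prod μ)

/-- Quadratical partial sum `S_{n,n} a` of the two-dimensional Walsh-Fourier series. -/
def sqPartialSum (μ : Measure G) (a : G × G → ℝ) (n : ℕ) (z : G × G) : ℝ :=
  ∑ i ∈ Finset.range n, ∑ j ∈ Finset.range n,
    fourierCoef μ a i j * walsh i z.1 * walsh j z.2

/-- The σ-algebra on `G × G` generated by the dyadic squares `I_n(x) × I_n(y)`,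
i.e. by the first `n` coordinates of each factor. -/
def dyadicSA (n : ℕ) : MeasurableSpace (G × G) :=
  MeasurableSpace.comap (fun z : G × G => fun k : Fin n => (z.1 k, z.2 k)) ⊤

/-- A (one-parameter) martingale with respect to the dyadic-square filtration. -/
def IsDyadicMartingale (μ : Measure G) (f : ℕ → G × G → ℝ) : Prop :=
  (∀ n, Integrable (f n) (μ.prod μ)) ∧
    (∀ n, Measurable[dyadicSA n] (f n)) ∧
    (∀ n, (μ.prod μ)[f (n + 1)|dyadicSA n] =ᵐ[μ.prod μ] f n)

/-- `‖f‖_{H_p}^p = ∫ (sup_n |f_{n,n}|)^p dμ`, as an extended real. -/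
def hardyNormP (μ : Measure G) (f : ℕ → G × G → ℝ) (p : ℝ) : ℝ≥0∞ :=
  ∫⁻ z, (⨆ n, (‖f n z‖₊ : ℝ≥0∞)) ^ p ∂(μ.prod μ)

/-- Walsh-Fourier coefficient of a martingale: `∫ f_{k,k} w_i(x) w_j(y)` for any
`k` with `2^k > max i j`; `k = max i j + 1` works. -/
def martCoef (μ : Measure G) (f : ℕ → G × G → ℝ) (i j : ℕ) : ℝ :=
  ∫ z, f (max i j + 1) z * walsh i z.1 * walsh j z.2 ∂(μ.prod μ)

/-- Quadratical partial sum `S_{n,n} f` of a martingale. -/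
def martSq (μ : Measure G) (f : ℕ → G × G → ℝ) (n : ℕ) (z : G × G) : ℝ :=
  ∑ i ∈ Finset.range n, ∑ j ∈ Finset.range n,
    martCoef μ f i j * walsh i z.1 * walsh j z.2

/-- The weak-`L_p` quasinorm `sup_{λ>0} λ · ν(|g| > λ)^{1/p}`. -/
def weakLpNorm (ν : Measure (G × G)) (g : G × G → ℝ) (p : ℝ) : ℝ≥0∞ :=
  ⨆ t : ℝ≥0, (t : ℝ≥0∞) * ν {z | (t : ℝ) < |g z|} ^ (1 / p)

/-- The atom `a_α` from the counterexample construction. -/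
def atomFun (p : ℝ) (α : ℕ) (z : G × G) : ℝ :=
  (2 : ℝ) ^ ((α : ℝ) * (2 / p - 2)) *
    (dirichlet (2 ^ (α + 1)) z.1 - dirichlet (2 ^ α) z.1) *
    (dirichlet (2 ^ (α + 1)) z.2 - dirichlet (2 ^ α) z.2)

/-- The counterexample martingale `f_{A,A} = ∑_{α_k < A} Φ(2^{α_k})^{-1/4} a_k`. -/
def counterMart (p : ℝ) (Φ : ℕ → ℝ) (α : ℕ → ℕ) (A : ℕ) (z : G × G) : ℝ :=
  ∑ k ∈ Finset.range A,
    if α k < A then (Φ (2 ^ α k)) ^ (-(1 / 4 : ℝ)) * atomFun p (α k) z else 0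

private lemma prod_bits_ext (n : ℕ) (x : G) {M₁ M₂ : ℕ} (h1 : n < 2 ^ M₁) (h2 : M₁ ≤ M₂) :
    (∏ k ∈ Finset.range M₂, if n.testBit k ∧ x k = 1 then (-1:ℝ) else 1) =
      ∏ k ∈ Finset.range M₁, if n.testBit k ∧ x k = 1 then -1 else 1 := by
  refine (Finset.prod_subset (Finset.range_subset_range.2 h2) ?_).symm
  intro k _ hk
  simp only [Finset.mem_range, not_lt] at hk
  have : n.testBit k = false :=
    Nat.testBit_lt_two_pow (lt_of_lt_of_le h1 (Nat.pow_le_pow_right (by norm_num) hk))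
  simp [this]

lemma walsh_eq (n M : ℕ) (h : n < 2 ^ M) (x : G) :
    walsh n x = ∏ k ∈ Finset.range M, if n.testBit k ∧ x k = 1 then -1 else 1 := by
  unfold walsh
  have h1 : n < 2 ^ (n + 1) := (Nat.lt_two_pow_self (n := n)).trans_le
    (Nat.pow_le_pow_right (by norm_num) (Nat.le_succ n))
  exact (prod_bits_ext n x h1 (le_max_left (n+1) M)).symm.trans
    (prod_bits_ext n x h (le_max_right (n+1) M))

lemma walsh_mul (i j : ℕ) (x : G) : walsh i x * walsh j x = walsh (i ^^^ j) x := by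
  set M := max i j + 1 with hM
  have hmax : max i j < 2 ^ M := (Nat.lt_two_pow_self).trans_le
    (Nat.pow_le_pow_right (by norm_num) (Nat.le_succ _))
  have hi : i < 2 ^ M := lt_of_le_of_lt (le_max_left i j) hmax
  have hj : j < 2 ^ M := lt_of_le_of_lt (le_max_right i j) hmax
  have hx : i ^^^ j < 2 ^ M := Nat.xor_lt_two_pow hi hj
  rw [walsh_eq i M hi, walsh_eq j M hj, walsh_eq _ M hx, ← Finset.prod_mul_distrib]
  refine Finset.prod_congr rfl fun k _ => ?_
  by_cases hxk : x k = 1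
  · simp only [hxk, and_true, Nat.testBit_xor]
    cases hik : i.testBit k <;> cases hjk : j.testBit k <;> simp
  · simp [hxk]

lemma walsh_two_pow (m : ℕ) (x : G) : walsh (2 ^ m) x = if x m = 1 then -1 else 1 := by
  rw [walsh_eq (2^m) (m+1) (Nat.pow_lt_pow_right (by norm_num) (Nat.lt_succ_self m)) x]
  rw [Finset.prod_range_succ]
  have h1 : ∀ k ∈ Finset.range m, (if (2^m).testBit k ∧ x k = 1 then (-1:ℝ) else 1) = 1 := by
    intro k hk
    simp only [Finset.mem_range] at hk
    simp [Nat.testBit_two_pow, hk.ne']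
  rw [Finset.prod_congr rfl h1]
  simp [Nat.testBit_two_pow]

lemma two_pow_xor (m j : ℕ) (h : j < 2 ^ m) : 2 ^ m ^^^ j = 2 ^ m + j := by
  apply Nat.eq_of_testBit_eq
  intro k
  rcases lt_trichotomy k m with hk | rfl | hk
  · rw [Nat.testBit_xor, Nat.testBit_two_pow_add_gt hk, Nat.testBit_two_pow]
    simp [hk.ne']
  · rw [Nat.testBit_xor, Nat.testBit_two_pow]
    have : (2 ^ k + j).testBit k = !j.testBit k := Nat.testBit_two_pow_add_eq j k
    rw [this, Nat.testBit_lt_two_pow h]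
    simp
  · have h2 : 2 ^ m + j < 2 ^ k := by
      calc 2 ^ m + j < 2 ^ m + 2 ^ m := by omega
      _ = 2 ^ (m+1) := by ring
      _ ≤ 2 ^ k := Nat.pow_le_pow_right (by norm_num) hk
    rw [Nat.testBit_xor, Nat.testBit_lt_two_pow h2, Nat.testBit_two_pow,
      Nat.testBit_lt_two_pow (h.trans (Nat.pow_lt_pow_right (by norm_num) hk))]
    simp [hk.ne]

lemma walsh_two_pow_add (m j : ℕ) (h : j < 2 ^ m) (x : G) :
    walsh (2 ^ m + j) x = walsh (2 ^ m) x * walsh j x := by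
  rw [walsh_mul, two_pow_xor m j h]

lemma dirichlet_two_pow (m : ℕ) (x : G) :
    dirichlet (2 ^ m) x = ∏ k ∈ Finset.range m, (if x k = 0 then 2 else 0) := by
  induction m with
  | zero => simp [dirichlet, walsh]
  | succ m ih =>
    have : dirichlet (2 ^ (m+1)) x = dirichlet (2 ^ m) x + ∑ j ∈ Finset.range (2^m), walsh (2^m + j) x := by
      unfold dirichlet
      rw [show 2 ^ (m+1) = 2 ^ m + 2 ^ m by ring, Finset.sum_range_add]
    rw [this, Finset.prod_range_succ, ← ih]
    have hs : ∑ j ∈ Finset.range (2^m), walsh (2^m + j) x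
        = walsh (2^m) x * dirichlet (2^m) x := by
      rw [dirichlet, Finset.mul_sum]
      exact Finset.sum_congr rfl fun j hj =>
        walsh_two_pow_add m j (Finset.mem_range.1 hj) x
    rw [hs, walsh_two_pow]
    have hcase : ∀ c : ZMod 2, c = 0 ∨ c = 1 := by decide
    rcases hcase (x m) with h0 | h0
    · have : x m ≠ 1 := by rw [h0]; decide
      simp only [h0, this, if_false, if_pos rfl, ite_true]
      rw [if_neg (by decide : ¬((0:ZMod 2)=1))]; ring
    · have : x m ≠ 0 := by rw [h0]; decide
      simp only [h0, this, if_true, if_false, ite_false, if_neg this]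
      rw [if_neg (by decide : ¬((1:ZMod 2)=0))]; ring

open MeasureTheory
variable {μ : Measure G}

lemma isProb (hμ : IsStdHaar μ) : IsProbabilityMeasure μ := by
  constructor
  have := hμ 0 (fun _ => 0)
  simpa using this

def cylSet (N : ℕ) (v : Fin N → ZMod 2) : Set G := {y : G | ∀ i : Fin N, y (i:ℕ) = v i}

lemma measurableSet_cylSet (N : ℕ) (v : Fin N → ZMod 2) : MeasurableSet (cylSet N v) := by
  have : cylSet N v = ⋂ i : Fin N, (fun y : G => y (i:ℕ)) ⁻¹' {v i} := by
    ext y; simp [cylSet, Set.mem_iInter]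
  rw [this]
  exact MeasurableSet.iInter fun i =>
    (measurable_pi_apply (i:ℕ)) (by exact MeasurableSpace.measurableSet_top)

lemma measure_cylSet (hμ : IsStdHaar μ) (N : ℕ) (v : Fin N → ZMod 2) :
    μ (cylSet N v) = 2⁻¹ ^ N := by
  have := hμ N (fun k => if h : k < N then v ⟨k, h⟩ else 0)
  convert this using 2
  ext y
  constructor
  · intro hy k hk
    simpa [hk] using hy ⟨k, hk⟩
  · intro hy i
    simpa [i.isLt] using hy (i:ℕ) i.isLt

lemma cylFun_decomp (N : ℕ) (G0 : (Fin N → ZMod 2) → ℝ) (x : G) :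
    G0 (fun i => x (i:ℕ)) = ∑ v : Fin N → ZMod 2, (cylSet N v).indicator (fun _ => G0 v) x := by
  rw [Finset.sum_eq_single (fun i : Fin N => x (i:ℕ))]
  · simp [Set.indicator, cylSet]
  · intro v _ hv
    rw [Set.indicator_of_notMem]
    intro hx
    exact hv (funext fun i => (hx i).symm)
  · simp

lemma integrable_cylFun (hμ : IsStdHaar μ) (N : ℕ) (G0 : (Fin N → ZMod 2) → ℝ) :
    Integrable (fun x => G0 (fun i => x (i:ℕ))) μ := by
  haveI := isProb hμ
  have : (fun x => G0 (fun i => x (i:ℕ)))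
      = fun x => ∑ v : Fin N → ZMod 2, (cylSet N v).indicator (fun _ => G0 v) x := by
    ext x; exact cylFun_decomp N G0 x
  rw [this]
  exact integrable_finset_sum _ fun v _ =>
    (integrable_const (G0 v)).indicator (measurableSet_cylSet N v)

lemma integral_cylFun (hμ : IsStdHaar μ) (N : ℕ) (G0 : (Fin N → ZMod 2) → ℝ) :
    ∫ x, G0 (fun i => x (i:ℕ)) ∂μ = (2⁻¹ : ℝ) ^ N * ∑ v : Fin N → ZMod 2, G0 v := by
  haveI := isProb hμ
  have h1 : ∫ x, G0 (fun i => x (i:ℕ)) ∂μ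
      = ∑ v : Fin N → ZMod 2, ∫ x, (cylSet N v).indicator (fun _ => G0 v) x ∂μ := by
    rw [← integral_finset_sum]
    · exact integral_congr_ae (Filter.Eventually.of_forall fun x => cylFun_decomp N G0 x)
    · exact fun v _ => (integrable_const (G0 v)).indicator (measurableSet_cylSet N v)
  rw [h1, Finset.mul_sum]
  refine Finset.sum_congr rfl fun v _ => ?_
  rw [integral_indicator_const _ (measurableSet_cylSet N v), measureReal_def, measure_cylSet hμ N v]
  have : ((2⁻¹ : ENNReal) ^ N).toReal = (2⁻¹ : ℝ) ^ N := by
    rw [ENNReal.toReal_pow]; norm_num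
  rw [this, smul_eq_mul, mul_comm]

lemma walsh_cylFun (m : ℕ) (x : G) :
    walsh m x = ∏ i : Fin (m+1), if m.testBit (i:ℕ) ∧ x (i:ℕ) = 1 then (-1:ℝ) else 1 := by
  rw [walsh, ← Fin.prod_univ_eq_prod_range (fun k => if m.testBit k ∧ x k = 1 then (-1:ℝ) else 1) (m+1)]

lemma integrable_walsh (hμ : IsStdHaar μ) (m : ℕ) : Integrable (walsh m) μ := by
  have := integrable_cylFun hμ (m+1)
    (fun v => ∏ i : Fin (m+1), if m.testBit (i:ℕ) ∧ v i = 1 then (-1:ℝ) else 1)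
  convert this using 1
  ext x
  exact walsh_cylFun m x

lemma sum_zmod2 (f : ZMod 2 → ℝ) : ∑ c : ZMod 2, f c = f 0 + f 1 := by
  exact Fin.sum_univ_two f

lemma integral_walsh (hμ : IsStdHaar μ) (m : ℕ) :
    ∫ x, walsh m x ∂μ = if m = 0 then 1 else 0 := by
  have h := integral_cylFun hμ (m+1)
    (fun v => ∏ i : Fin (m+1), if m.testBit (i:ℕ) ∧ v i = 1 then (-1:ℝ) else 1)
  have h2 : ∫ x, walsh m x ∂μ = ∫ x, (fun v : Fin (m+1) → ZMod 2 =>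
      ∏ i : Fin (m+1), if m.testBit (i:ℕ) ∧ v i = 1 then (-1:ℝ) else 1) (fun i => x (i:ℕ)) ∂μ :=
    integral_congr_ae (Filter.Eventually.of_forall fun x => walsh_cylFun m x)
  rw [h2, h]
  have hsum : ∑ v : Fin (m+1) → ZMod 2,
      ∏ i : Fin (m+1), (if m.testBit (i:ℕ) ∧ v i = 1 then (-1:ℝ) else 1)
      = ∏ i : Fin (m+1), (if m.testBit (i:ℕ) then (0:ℝ) else 2) := by
    have e1 : (∏ i : Fin (m+1), ∑ c ∈ (Finset.univ : Finset (ZMod 2)),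
        (if m.testBit (i:ℕ) ∧ c = 1 then (-1:ℝ) else 1))
        = ∑ v ∈ Fintype.piFinset (fun _ : Fin (m+1) => (Finset.univ : Finset (ZMod 2))),
          ∏ i : Fin (m+1), (if m.testBit (i:ℕ) ∧ v i = 1 then (-1:ℝ) else 1) :=
      Finset.prod_univ_sum _ _
    rw [Fintype.piFinset_univ] at e1
    rw [← e1]
    refine Finset.prod_congr rfl fun i _ => ?_
    rw [sum_zmod2 (fun c => if m.testBit (i:ℕ) ∧ c = 1 then (-1:ℝ) else 1)]
    cases hb : m.testBit (i:ℕ)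
    · norm_num
    · simp only [hb, true_and]
      norm_num
  rw [hsum]
  by_cases hm : m = 0
  · subst hm
    simp [Finset.prod_const]
  · rw [if_neg hm]
    have : ∃ i : Fin (m+1), m.testBit (i:ℕ) = true := by
      by_contra hc
      push_neg at hc
      apply hm
      apply Nat.eq_of_testBit_eq
      intro k
      rcases lt_or_ge k (m+1) with hk | hk
      · simpa using hc ⟨k, hk⟩
      · rw [Nat.zero_testBit, Nat.testBit_lt_two_pow]
        have h1 : m < 2 ^ (m+1) := (Nat.lt_two_pow_self (n := m)).trans_le
          (Nat.pow_le_pow_right (by norm_num) (Nat.le_succ m))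
        exact h1.trans_le (Nat.pow_le_pow_right (by norm_num) hk)
    obtain ⟨i, hi⟩ := this
    rw [Finset.prod_eq_zero (Finset.mem_univ i) (by simp [hi]), mul_zero]

lemma integrable_walsh_mul (hμ : IsStdHaar μ) (i j : ℕ) :
    Integrable (fun x => walsh i x * walsh j x) μ := by
  have := integrable_walsh hμ (i ^^^ j)
  convert this using 1
  ext x
  exact walsh_mul i j x

lemma integral_walsh_mul (hμ : IsStdHaar μ) (i j : ℕ) :
    ∫ x, walsh i x * walsh j x ∂μ = if i = j then 1 else 0 := by
  have h2 : ∫ x, walsh i x * walsh j x ∂μ = ∫ x, walsh (i ^^^ j) x ∂μ :=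
    integral_congr_ae (Filter.Eventually.of_forall fun x => walsh_mul i j x)
  rw [h2, integral_walsh hμ]
  congr 1
  have hx : i ^^^ j = 0 ↔ i = j := ⟨fun h => by
      have := congrArg (· ^^^ j) h
      simpa [Nat.xor_assoc] using this, fun h => by subst h; exact Nat.xor_self i⟩
  simp [hx]
lemma two_mul_xor_one (s : ℕ) : (2*s) ^^^ 1 = 2*s+1 := by
  apply Nat.eq_of_testBit_eq
  intro k
  cases k with
  | zero => simp [Nat.testBit_xor, Nat.testBit_zero]
  | succ k =>
      rw [Nat.testBit_xor, Nat.testBit_succ, Nat.testBit_succ, Nat.testBit_succ]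
      have h1 : 2*s/2 = s := by omega
      have h2 : (2*s+1)/2 = s := by omega
      have h3 : 1/2 = 0 := by omega
      rw [h1, h2, h3, Nat.zero_testBit]
      simp

lemma abs_walsh (m : ℕ) (x : G) : |walsh m x| = 1 := by
  rw [walsh, Finset.abs_prod]
  apply Finset.prod_eq_one
  intro k _
  split <;> norm_num

lemma walsh_one (x : G) (hx : x 0 = 1) : walsh 1 x = -1 := by
  have := walsh_two_pow 0 x
  rw [pow_zero] at this
  rw [this, if_pos hx]

lemma walsh_succ_of_even (s : ℕ) (x : G) (hx : x 0 = 1) :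
    walsh (2*s+1) x = - walsh (2*s) x := by
  rw [← two_mul_xor_one s, ← walsh_mul, walsh_one x hx]
  ring

lemma dirichlet_odd (x : G) (hx : x 0 = 1) (s : ℕ) :
    dirichlet (2*s+1) x = walsh (2*s) x := by
  induction s with
  | zero => simp [dirichlet, walsh]
  | succ s ih =>
      have e : 2*(s+1)+1 = (2*s+1) + 1 + 1 := by ring
      rw [e, dirichlet, Finset.sum_range_succ, Finset.sum_range_succ, ← dirichlet, ih,
        walsh_succ_of_even s x hx]
      have e2 : 2*s+1+1 = 2*(s+1) := by ring
      rw [e2]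
      ring

lemma abs_dirichlet_odd (x : G) (hx : x 0 = 1) (n : ℕ) (hn : Odd n) :
    |dirichlet n x| = 1 := by
  obtain ⟨s, hs⟩ := hn
  subst hs
  rw [dirichlet_odd x hx s, abs_walsh]

lemma dirichlet_two_pow_zero (m : ℕ) (hm : 1 ≤ m) (x : G) (hx : x 0 = 1) :
    dirichlet (2^m) x = 0 := by
  rw [dirichlet_two_pow]
  refine Finset.prod_eq_zero (Finset.mem_range.2 hm) ?_
  rw [if_neg]
  rw [hx]
  decide

lemma block_eq_sum (a : ℕ) (x : G) :
    dirichlet (2^(a+1)) x - dirichlet (2^a) x = ∑ i ∈ Finset.Ico (2^a) (2^(a+1)), walsh i x := by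
  rw [dirichlet, dirichlet, ← Finset.sum_Ico_eq_sub]
  exact Nat.pow_le_pow_right (by norm_num) (Nat.le_succ a)

lemma integrable_block_mul (hμ : IsStdHaar μ) (a i : ℕ) :
    Integrable (fun x => (dirichlet (2^(a+1)) x - dirichlet (2^a) x) * walsh i x) μ := by
  have he : (fun x => (dirichlet (2^(a+1)) x - dirichlet (2^a) x) * walsh i x)
      = fun x => ∑ i' ∈ Finset.Ico (2^a) (2^(a+1)), walsh i' x * walsh i x := by
    ext x
    rw [block_eq_sum, Finset.sum_mul]
  rw [he]
  exact integrable_finset_sum _ fun i' _ => integrable_walsh_mul hμ i' i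

lemma integral_block_mul (hμ : IsStdHaar μ) (a i : ℕ) :
    ∫ x, (dirichlet (2^(a+1)) x - dirichlet (2^a) x) * walsh i x ∂μ
      = if i ∈ Finset.Ico (2^a) (2^(a+1)) then 1 else 0 := by
  have he : ∀ x, (dirichlet (2^(a+1)) x - dirichlet (2^a) x) * walsh i x
      = ∑ i' ∈ Finset.Ico (2^a) (2^(a+1)), walsh i' x * walsh i x := by
    intro x
    rw [block_eq_sum, Finset.sum_mul]
  rw [integral_congr_ae (Filter.Eventually.of_forall he),
    integral_finset_sum _ fun i' _ => integrable_walsh_mul hμ i' i]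
  have : ∀ i' ∈ Finset.Ico (2^a) (2^(a+1)),
      ∫ x, walsh i' x * walsh i x ∂μ = if i' = i then 1 else 0 :=
    fun i' _ => integral_walsh_mul hμ i' i
  rw [Finset.sum_congr rfl this, Finset.sum_ite_eq' (Finset.Ico (2^a) (2^(a+1))) i (fun _ => (1:ℝ))]

lemma integrable_atom_mul (hμ : IsStdHaar μ) (p : ℝ) (a i j : ℕ) :
    Integrable (fun z => atomFun p a z * walsh i z.1 * walsh j z.2) (μ.prod μ) := by
  haveI := isProb hμ
  have he : (fun z : G × G => atomFun p a z * walsh i z.1 * walsh j z.2)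
      = fun z => (2 : ℝ) ^ ((a : ℝ) * (2 / p - 2)) *
        (((dirichlet (2^(a+1)) z.1 - dirichlet (2^a) z.1) * walsh i z.1) *
         ((dirichlet (2^(a+1)) z.2 - dirichlet (2^a) z.2) * walsh j z.2)) := by
    ext z; unfold atomFun; ring
  rw [he]
  exact (((integrable_block_mul hμ a i).mul_prod (integrable_block_mul hμ a j)).const_mul _)

lemma integral_atom_mul (hμ : IsStdHaar μ) (p : ℝ) (a i j : ℕ) :
    ∫ z, atomFun p a z * walsh i z.1 * walsh j z.2 ∂(μ.prod μ)
      = (2 : ℝ) ^ ((a : ℝ) * (2 / p - 2)) *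
        (if i ∈ Finset.Ico (2^a) (2^(a+1)) then 1 else 0) *
        (if j ∈ Finset.Ico (2^a) (2^(a+1)) then 1 else 0) := by
  haveI := isProb hμ
  have he : ∀ z : G × G, atomFun p a z * walsh i z.1 * walsh j z.2
      = (2 : ℝ) ^ ((a : ℝ) * (2 / p - 2)) *
        (((dirichlet (2^(a+1)) z.1 - dirichlet (2^a) z.1) * walsh i z.1) *
         ((dirichlet (2^(a+1)) z.2 - dirichlet (2^a) z.2) * walsh j z.2)) := by
    intro z; unfold atomFun; ring
  rw [integral_congr_ae (Filter.Eventually.of_forall he), integral_const_mul,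
    integral_prod_mul (fun x => (dirichlet (2^(a+1)) x - dirichlet (2^a) x) * walsh i x)
      (fun y => (dirichlet (2^(a+1)) y - dirichlet (2^a) y) * walsh j y),
    integral_block_mul hμ a i, integral_block_mul hμ a j, mul_assoc]

lemma martCoef_counter (hμ : IsStdHaar μ) (p : ℝ) (Φ : ℕ → ℝ) (α : ℕ → ℕ) (i j : ℕ) :
    martCoef μ (counterMart p Φ α) i j
      = ∑ κ ∈ Finset.range (max i j + 1),
          if α κ < max i j + 1 then
            (Φ (2 ^ α κ)) ^ (-(1 / 4 : ℝ)) * ((2 : ℝ) ^ ((α κ : ℝ) * (2 / p - 2)) *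
              (if i ∈ Finset.Ico (2^(α κ)) (2^(α κ+1)) then 1 else 0) *
              (if j ∈ Finset.Ico (2^(α κ)) (2^(α κ+1)) then 1 else 0))
          else 0 := by
  haveI := isProb hμ
  set A := max i j + 1 with hA
  have he : ∀ z : G × G, counterMart p Φ α A z * walsh i z.1 * walsh j z.2
      = ∑ κ ∈ Finset.range A, (if α κ < A then
          (Φ (2 ^ α κ)) ^ (-(1 / 4 : ℝ)) * (atomFun p (α κ) z * walsh i z.1 * walsh j z.2)
        else 0) := by
    intro z
    unfold counterMart
    rw [Finset.sum_mul, Finset.sum_mul]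
    refine Finset.sum_congr rfl fun κ _ => ?_
    by_cases h : α κ < A
    · rw [if_pos h, if_pos h]; ring
    · rw [if_neg h, if_neg h, zero_mul, zero_mul]
  have hint : ∀ κ ∈ Finset.range A, Integrable (fun z : G × G => if α κ < A then
      (Φ (2 ^ α κ)) ^ (-(1 / 4 : ℝ)) * (atomFun p (α κ) z * walsh i z.1 * walsh j z.2)
      else 0) (μ.prod μ) := by
    intro κ _
    by_cases h : α κ < A
    · simp only [if_pos h]
      exact (integrable_atom_mul hμ p (α κ) i j).const_mul _
    · simp only [if_neg h]
      exact integrable_zero _ _ _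
  rw [martCoef, integral_congr_ae (Filter.Eventually.of_forall he), integral_finset_sum _ hint]
  refine Finset.sum_congr rfl fun κ _ => ?_
  by_cases h : α κ < A
  · simp only [if_pos h]
    rw [integral_const_mul, integral_atom_mul hμ p (α κ) i j]
  · simp only [if_neg h, integral_zero]

lemma martCoef_counter' (hμ : IsStdHaar μ) (p : ℝ) (Φ : ℕ → ℝ) (α : ℕ → ℕ)
    (hα : StrictMono α) (k n i j : ℕ) (hn2 : n < 2 ^ (α k + 1)) (hi : i < n) (hj : j < n) :
    martCoef μ (counterMart p Φ α) i j
      = ∑ κ ∈ Finset.range (k+1),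
          if i ∈ Finset.Ico (2^(α κ)) (2^(α κ+1)) ∧ j ∈ Finset.Ico (2^(α κ)) (2^(α κ+1))
          then (Φ (2 ^ α κ)) ^ (-(1 / 4 : ℝ)) * (2 : ℝ) ^ ((α κ : ℝ) * (2 / p - 2))
          else 0 := by
  rw [martCoef_counter hμ p Φ α i j]
  set A := max i j + 1 with hAdef
  have h1 : ∑ κ ∈ Finset.range A,
        (if α κ < A then
          (Φ (2 ^ α κ)) ^ (-(1 / 4 : ℝ)) * ((2 : ℝ) ^ ((α κ : ℝ) * (2 / p - 2)) *
            (if i ∈ Finset.Ico (2^(α κ)) (2^(α κ+1)) then 1 else 0) *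
            (if j ∈ Finset.Ico (2^(α κ)) (2^(α κ+1)) then 1 else 0))
        else 0)
      = ∑ κ ∈ Finset.range (max A (k+1)),
        (if α κ < A then
          (Φ (2 ^ α κ)) ^ (-(1 / 4 : ℝ)) * ((2 : ℝ) ^ ((α κ : ℝ) * (2 / p - 2)) *
            (if i ∈ Finset.Ico (2^(α κ)) (2^(α κ+1)) then 1 else 0) *
            (if j ∈ Finset.Ico (2^(α κ)) (2^(α κ+1)) then 1 else 0))
        else 0) := by
    refine Finset.sum_subset (Finset.range_subset_range.2 (le_max_left _ _)) ?_
    intro κ _ hκ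
    rw [Finset.mem_range, not_lt] at hκ
    have hle : κ ≤ α κ := hα.le_apply
    rw [if_neg (by omega)]
  have h2 : ∑ κ ∈ Finset.range (k+1),
        (if i ∈ Finset.Ico (2^(α κ)) (2^(α κ+1)) ∧ j ∈ Finset.Ico (2^(α κ)) (2^(α κ+1))
          then (Φ (2 ^ α κ)) ^ (-(1 / 4 : ℝ)) * (2 : ℝ) ^ ((α κ : ℝ) * (2 / p - 2))
          else 0)
      = ∑ κ ∈ Finset.range (max A (k+1)),
        (if i ∈ Finset.Ico (2^(α κ)) (2^(α κ+1)) ∧ j ∈ Finset.Ico (2^(α κ)) (2^(α κ+1))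
          then (Φ (2 ^ α κ)) ^ (-(1 / 4 : ℝ)) * (2 : ℝ) ^ ((α κ : ℝ) * (2 / p - 2))
          else 0) := by
    refine Finset.sum_subset (Finset.range_subset_range.2 (le_max_right _ _)) ?_
    intro κ _ hκ
    rw [Finset.mem_range, not_lt] at hκ
    rw [if_neg]
    rintro ⟨hi', -⟩
    rw [Finset.mem_Ico] at hi'
    have hαk : α k < α κ := hα (by omega)
    have hpow : 2 ^ (α k + 1) ≤ 2 ^ (α κ) := Nat.pow_le_pow_right (by norm_num) (by omega)
    omega
  rw [h1, h2]
  refine Finset.sum_congr rfl fun κ _ => ?_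
  by_cases hi' : i ∈ Finset.Ico (2^(α κ)) (2^(α κ+1))
  · by_cases hj' : j ∈ Finset.Ico (2^(α κ)) (2^(α κ+1))
    · have hiA : 2 ^ (α κ) ≤ i := (Finset.mem_Ico.1 hi').1
      have hlt : α κ < 2 ^ (α κ) := Nat.lt_two_pow_self (n := α κ)
      have hmax := le_max_left i j
      have hineq : α κ < A := by omega
      rw [if_pos hineq, if_pos hi', if_pos hj', if_pos ⟨hi', hj'⟩]
      ring
    · simp [hi', hj']
  · simp [hi']

lemma blocksum (α : ℕ → ℕ) (hα : StrictMono α) (hα0 : 2 ≤ α 0) (k n : ℕ)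
    (hn1 : 2 ^ α k < n) (hn2 : n < 2 ^ (α k + 1)) (κ : ℕ) (hκ : κ ≤ k)
    (x : G) (hx : x 0 = 1) :
    ∑ i ∈ Finset.range n, (if i ∈ Finset.Ico (2^(α κ)) (2^(α κ+1)) then walsh i x else 0)
      = if κ = k then dirichlet n x else 0 := by
  have hα1 : 1 ≤ α κ := le_trans (by omega) (hα.monotone (Nat.zero_le κ))
  rw [Finset.sum_ite_mem, Finset.range_eq_Ico, Finset.Ico_inter_Ico,
    max_eq_right (Nat.zero_le _)]
  rcases eq_or_lt_of_le hκ with rfl | hlt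
  · rw [min_eq_left hn2.le, if_pos rfl, Finset.sum_Ico_eq_sub _ hn1.le, ← dirichlet, ← dirichlet,
      dirichlet_two_pow_zero (α κ) hα1 x hx, sub_zero]
  · have h1 : α κ + 1 ≤ α k := hα hlt
    have h2 : (2:ℕ) ^ (α κ + 1) ≤ 2 ^ (α k) := Nat.pow_le_pow_right (by norm_num) h1
    rw [min_eq_right (by omega), Finset.sum_Ico_eq_sub _
        (Nat.pow_le_pow_right (by norm_num) (Nat.le_succ _)), ← dirichlet, ← dirichlet,
      dirichlet_two_pow_zero (α κ + 1) (by omega) x hx,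
      dirichlet_two_pow_zero (α κ) hα1 x hx, sub_zero, if_neg (by omega)]


/-- On `(G \ I_1) × (G \ I_1)`, for odd `n` with `2^{α_k} < n < 2^{α_k + 1}`,
`|S_{n,n} f(x,y)| = 2^{α_k(2/p-2)} / Φ(2^{α_k})^{1/4}`. -/
theorem counterMart_sq_abs (p : ℝ) (hp0 : 0 < p) (hp1 : p < 1)
    (μ : Measure G) (hμ : IsStdHaar μ)
    (Φ : ℕ → ℝ) (hΦ1 : ∀ m, 1 ≤ Φ m)
    (α : ℕ → ℕ) (hα : StrictMono α) (hα0 : 2 ≤ α 0)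
    (k n : ℕ) (hn1 : 2 ^ α k < n) (hn2 : n < 2 ^ (α k + 1)) (hodd : Odd n)
    (x y : G) (hx : x 0 = 1) (hy : y 0 = 1) :
    |martSq μ (counterMart p Φ α) n (x, y)| =
      (2 : ℝ) ^ ((α k : ℝ) * (2 / p - 2)) / (Φ (2 ^ α k)) ^ ((1 : ℝ) / 4) := by
  haveI := isProb hμ
  set c : ℕ → ℝ := fun κ =>
    (Φ (2 ^ α κ)) ^ (-(1 / 4 : ℝ)) * (2 : ℝ) ^ ((α κ : ℝ) * (2 / p - 2)) with hc
  have h1 : martSq μ (counterMart p Φ α) n (x, y)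
      = ∑ i ∈ Finset.range n, ∑ j ∈ Finset.range n, ∑ κ ∈ Finset.range (k+1),
          ((if i ∈ Finset.Ico (2^(α κ)) (2^(α κ+1)) ∧ j ∈ Finset.Ico (2^(α κ)) (2^(α κ+1))
            then c κ else 0) * walsh i x) * walsh j y := by
    rw [martSq]
    refine Finset.sum_congr rfl fun i hi => Finset.sum_congr rfl fun j hj => ?_
    rw [martCoef_counter' hμ p Φ α hα k n i j hn2 (Finset.mem_range.1 hi) (Finset.mem_range.1 hj),
      Finset.sum_mul, Finset.sum_mul]
  have hterm : ∀ κ i j,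
      ((if i ∈ Finset.Ico (2^(α κ)) (2^(α κ+1)) ∧ j ∈ Finset.Ico (2^(α κ)) (2^(α κ+1))
        then c κ else 0) * walsh i x) * walsh j y
      = (c κ * (if i ∈ Finset.Ico (2^(α κ)) (2^(α κ+1)) then walsh i x else 0)) *
          (if j ∈ Finset.Ico (2^(α κ)) (2^(α κ+1)) then walsh j y else 0) := by
    intro κ i j
    by_cases hi' : i ∈ Finset.Ico (2^(α κ)) (2^(α κ+1)) <;>
      by_cases hj' : j ∈ Finset.Ico (2^(α κ)) (2^(α κ+1)) <;>
      simp [hi', hj'] <;> ring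
  have h2 : martSq μ (counterMart p Φ α) n (x, y)
      = ∑ κ ∈ Finset.range (k+1),
          c κ * (∑ i ∈ Finset.range n, (if i ∈ Finset.Ico (2^(α κ)) (2^(α κ+1)) then walsh i x else 0))
            * (∑ j ∈ Finset.range n, (if j ∈ Finset.Ico (2^(α κ)) (2^(α κ+1)) then walsh j y else 0)) := by
    rw [h1]
    have hswap : (∑ i ∈ Finset.range n, ∑ j ∈ Finset.range n, ∑ κ ∈ Finset.range (k+1),
          ((if i ∈ Finset.Ico (2^(α κ)) (2^(α κ+1)) ∧ j ∈ Finset.Ico (2^(α κ)) (2^(α κ+1))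
            then c κ else 0) * walsh i x) * walsh j y)
        = ∑ κ ∈ Finset.range (k+1), ∑ i ∈ Finset.range n, ∑ j ∈ Finset.range n,
          ((if i ∈ Finset.Ico (2^(α κ)) (2^(α κ+1)) ∧ j ∈ Finset.Ico (2^(α κ)) (2^(α κ+1))
            then c κ else 0) * walsh i x) * walsh j y := by
      rw [show (∑ i ∈ Finset.range n, ∑ j ∈ Finset.range n, ∑ κ ∈ Finset.range (k+1),
          ((if i ∈ Finset.Ico (2^(α κ)) (2^(α κ+1)) ∧ j ∈ Finset.Ico (2^(α κ)) (2^(α κ+1))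
            then c κ else 0) * walsh i x) * walsh j y)
          = ∑ i ∈ Finset.range n, ∑ κ ∈ Finset.range (k+1), ∑ j ∈ Finset.range n,
          ((if i ∈ Finset.Ico (2^(α κ)) (2^(α κ+1)) ∧ j ∈ Finset.Ico (2^(α κ)) (2^(α κ+1))
            then c κ else 0) * walsh i x) * walsh j y
        from Finset.sum_congr rfl fun i _ => Finset.sum_comm]
      exact Finset.sum_comm
    rw [hswap]
    refine Finset.sum_congr rfl fun κ _ => ?_
    calc ∑ i ∈ Finset.range n, ∑ j ∈ Finset.range n,
          ((if i ∈ Finset.Ico (2^(α κ)) (2^(α κ+1)) ∧ j ∈ Finset.Ico (2^(α κ)) (2^(α κ+1))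
            then c κ else 0) * walsh i x) * walsh j y
        = ∑ i ∈ Finset.range n, ∑ j ∈ Finset.range n,
          (c κ * (if i ∈ Finset.Ico (2^(α κ)) (2^(α κ+1)) then walsh i x else 0)) *
            (if j ∈ Finset.Ico (2^(α κ)) (2^(α κ+1)) then walsh j y else 0) :=
          Finset.sum_congr rfl fun i _ => Finset.sum_congr rfl fun j _ => hterm κ i j
      _ = ∑ i ∈ Finset.range n,
          (c κ * (if i ∈ Finset.Ico (2^(α κ)) (2^(α κ+1)) then walsh i x else 0)) *
            (∑ j ∈ Finset.range n, (if j ∈ Finset.Ico (2^(α κ)) (2^(α κ+1)) then walsh j y else 0)) :=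
          Finset.sum_congr rfl fun i _ => by rw [← Finset.mul_sum]
      _ = _ := by rw [← Finset.sum_mul, ← Finset.mul_sum]
  rw [h2]
  have h3 : ∀ κ ∈ Finset.range (k+1),
      c κ * (∑ i ∈ Finset.range n, (if i ∈ Finset.Ico (2^(α κ)) (2^(α κ+1)) then walsh i x else 0))
        * (∑ j ∈ Finset.range n, (if j ∈ Finset.Ico (2^(α κ)) (2^(α κ+1)) then walsh j y else 0))
      = c κ * (if κ = k then dirichlet n x else 0) * (if κ = k then dirichlet n y else 0) := by
    intro κ hκ
    have hκk : κ ≤ k := Nat.lt_succ_iff.1 (Finset.mem_range.1 hκ)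
    rw [blocksum α hα hα0 k n hn1 hn2 κ hκk x hx, blocksum α hα hα0 k n hn1 hn2 κ hκk y hy]
  rw [Finset.sum_congr rfl h3, Finset.sum_range_succ, if_pos rfl, if_pos rfl]
  have h4 : ∀ κ ∈ Finset.range k,
      c κ * (if κ = k then dirichlet n x else 0) * (if κ = k then dirichlet n y else 0) = 0 := by
    intro κ hκ
    rw [if_neg (by have := Finset.mem_range.1 hκ; omega), mul_zero, zero_mul]
  rw [Finset.sum_congr rfl h4, Finset.sum_const, smul_zero, zero_add]
  have hΦpos : (0:ℝ) < Φ (2 ^ α k) := lt_of_lt_of_le one_pos (hΦ1 _)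
  have hcpos : 0 < c k :=
    mul_pos (Real.rpow_pos_of_pos hΦpos _) (Real.rpow_pos_of_pos two_pos _)
  rw [abs_mul, abs_mul, abs_dirichlet_odd x hx n hodd, abs_dirichlet_odd y hy n hodd,
    mul_one, mul_one, abs_of_pos hcpos, hc]
  show Φ (2 ^ α k) ^ (-(1 / 4 : ℝ)) * (2:ℝ) ^ ((α k : ℝ) * (2 / p - 2))
      = 2 ^ ((α k : ℝ) * (2 / p - 2)) / Φ (2 ^ α k) ^ ((1:ℝ) / 4)
  rw [Real.rpow_neg hΦpos.le, inv_mul_eq_div]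


end
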